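/- arXiv:1310.6510 — 2 statements merged into one kernel-verified Lean document; each statement's English description precedes it below -/
import Mathlib

section
/- Separation lemma: If X is a compact topological (metric) space and A, B are nonempty closed subsets of X that are not separated (i.e., there is no decomposition of X into disjoint open sets U, V with A ⊆ U and B ⊆ V and U ∪ V = X), then A and B are connected in X: there exists a connected subset Y of X with Y ∩ A ≠ ∅ and Y ∩ B ≠ ∅. -/
theorem stmt_14 {X : Type*} [MetricSpace X] [CompactSpace X]
    (A B : Set X) (hA : IsClosed A) (hB : IsClosed B)
    (hAne : A.Nonempty) (hBne : B.Nonempty)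
    (hsep : ¬ ∃ U V : Set X, IsOpen U ∧ IsOpen V ∧ U.Nonempty ∧ V.Nonempty ∧
      Disjoint U V ∧ U ∪ V = Set.univ ∧ A ⊆ U ∧ B ⊆ V) :
    ∃ Y : Set X, IsConnected Y ∧ (Y ∩ A).Nonempty ∧ (Y ∩ B).Nonempty := by
  by_contra hcon
  push_neg at hcon
  -- No a ∈ A is in the connected component of any b ∈ B
  have hnot : ∀ a ∈ A, ∀ b ∈ B, a ∉ connectedComponent b := by
    intro a ha b hb hab
    have h1 : (connectedComponent b ∩ A).Nonempty := ⟨a, hab, ha⟩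
    have h2 : (connectedComponent b ∩ B).Nonempty := ⟨b, mem_connectedComponent, hb⟩
    rcases hcon _ isConnected_connectedComponent h1 with h
    exact h2.ne_empty (by simpa using h)
  -- For each a ∈ A, find a clopen set containing a and disjoint from B
  have key : ∀ a ∈ A, ∃ W : Set X, IsClopen W ∧ a ∈ W ∧ Disjoint W B := by
    intro a ha
    -- For each b ∈ B, a clopen set containing b but not a
    have step : ∀ b : B, ∃ C : Set X, IsClopen C ∧ (b : X) ∈ C ∧ a ∉ C := by
      rintro ⟨b, hb⟩
      have := hnot a ha b hb
      rw [connectedComponent_eq_iInter_isClopen b, Set.mem_iInter] at this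
      push_neg at this
      obtain ⟨⟨C, hC, hbC⟩, haC⟩ := this
      exact ⟨C, hC, hbC, haC⟩
    choose C hCcl hbC haC using step
    obtain ⟨t, ht⟩ := (hB.isCompact).elim_finite_subcover C (fun b => (hCcl b).2)
      (fun x hx => Set.mem_iUnion.2 ⟨⟨x, hx⟩, hbC ⟨x, hx⟩⟩)
    refine ⟨(⋃ i ∈ t, C i)ᶜ, (isClopen_biUnion_finset fun i _ => hCcl i).compl, ?_, ?_⟩
    · simp only [Set.mem_compl_iff, Set.mem_iUnion]
      rintro ⟨i, _, hi⟩; exact haC i hi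
    · rw [Set.disjoint_left]
      intro x hx hxB
      obtain ⟨i, hit, hxi⟩ := Set.mem_iUnion₂.1 (ht hxB)
      exact hx (Set.mem_biUnion hit hxi)
  choose W hWcl haW hWB using fun a : A => key a a.2
  obtain ⟨s, hs⟩ := (hA.isCompact).elim_finite_subcover W (fun a => (hWcl a).2)
    (fun x hx => Set.mem_iUnion.2 ⟨⟨x, hx⟩, haW ⟨x, hx⟩⟩)
  set U : Set X := ⋃ a ∈ s, W a with hU
  have hUcl : IsClopen U := isClopen_biUnion_finset fun a _ => hWcl a
  have hUB : Disjoint U B := by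
    rw [Set.disjoint_left]
    rintro x hx hxB
    obtain ⟨a, ha, hxa⟩ := Set.mem_iUnion₂.1 hx
    exact Set.disjoint_left.1 (hWB a) hxa hxB
  have hAU : A ⊆ U := fun x hx => by
    obtain ⟨a, ha⟩ := Set.mem_iUnion.1 (hs hx)
    simp only [Set.mem_iUnion] at ha
    exact Set.mem_biUnion ha.1 ha.2
  obtain ⟨a0, ha0⟩ := hAne
  obtain ⟨b0, hb0⟩ := hBne
  exact hsep ⟨U, Uᶜ, hUcl.isOpen, hUcl.compl.isOpen, ⟨a0, hAU ha0⟩,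
    ⟨b0, Set.disjoint_right.1 hUB hb0⟩, disjoint_compl_right, Set.union_compl_self U,
    hAU, fun x hx => Set.disjoint_right.1 hUB hx⟩
end

section
/- Dugundji extension theorem (special case): Let E be a normed space, C ⊆ E a closed subset, X a normed space, K ⊆ X convex, and f : C → K continuous. Then there exists a continuous map F : E → K extending f (F(u) = f(u) for all u ∈ C). -/
open Set Function Metric

theorem stmt_15 {E X : Type*} [NormedAddCommGroup E] [NormedSpace ℝ E]
    [NormedAddCommGroup X] [NormedSpace ℝ X]
    (C : Set E) (hC : IsClosed C) (hCne : C.Nonempty)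
    (K : Set X) (hK : Convex ℝ K) (hKne : K.Nonempty)
    (f : E → X) (hf : ContinuousOn f C) (hfK : ∀ u ∈ C, f u ∈ K) :
    ∃ F : E → X, Continuous F ∧ (∀ u ∈ C, F u = f u) ∧ (∀ u : E, F u ∈ K) := by
  classical
  set U : Set E := Cᶜ with hUdef
  have hUopen : IsOpen U := hC.isOpen_compl
  set r : U → ℝ := fun y => Metric.infDist (y : E) C with hrdef
  have hrpos : ∀ y : U, 0 < r y := fun y =>
    (hC.notMem_iff_infDist_pos hCne).mp y.2
  have hc : ∀ y : U, ∃ cy ∈ C, dist (y : E) cy < 2 * r y := by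
    intro y
    have : Metric.infDist (y : E) C < 2 * r y := by
      have := hrpos y; simp only [hrdef] at *; linarith
    exact (Metric.infDist_lt_iff hCne).mp this
  choose c hcC hcdist using hc
  set V : U → Set U := fun y => {z : U | dist (z : E) (y : E) < r y / 2} with hVdef
  have hVopen : ∀ y, IsOpen (V y) :=
    fun y => isOpen_lt (continuous_subtype_val.dist continuous_const) continuous_const
  have hVcover : (Set.univ : Set U) ⊆ ⋃ y, V y := fun z _ =>
    Set.mem_iUnion.mpr ⟨z, by simpa [hVdef] using half_pos (hrpos z)⟩
  obtain ⟨ρ, hρ⟩ := PartitionOfUnity.exists_isSubordinate isClosed_univ V hVopen hVcover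
  set g : U → X := fun z => ∑ᶠ y, ρ y z • f (c y) with hgdef
  have hgcont : Continuous g :=
    ρ.continuous_finsum_smul (g := fun i _ => f (c i)) (fun i x _ => continuousAt_const)
  have hgK : ∀ z : U, g z ∈ K := fun z =>
    ρ.finsum_smul_mem_convex (g := fun i _ => f (c i)) (Set.mem_univ z)
      (fun i _ => hfK _ (hcC i)) hK
  set F : E → X := fun x => if h : x ∈ C then f x else g ⟨x, h⟩ with hFdef
  have hFC : ∀ u ∈ C, F u = f u := fun u hu => dif_pos hu
  have hFU : ∀ x (h : x ∉ C), F x = g ⟨x, h⟩ := fun x h => dif_neg h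
  refine ⟨F, ?_, hFC, ?_⟩
  · -- continuity
    rw [continuous_iff_continuousAt]
    intro x
    by_cases hx : x ∈ C
    · -- continuity at points of C
      rw [Metric.continuousAt_iff]
      intro ε hε
      have hfx : ContinuousWithinAt f C x := hf x hx
      rw [ContinuousWithinAt, Metric.tendsto_nhdsWithin_nhds] at hfx
      obtain ⟨δ₁, hδ₁, hδ⟩ := hfx (ε / 2) (by positivity)
      refine ⟨δ₁ / 6, by positivity, fun {y} hy => ?_⟩
      rw [hFC x hx]
      by_cases hyC : y ∈ C
      · rw [hFC y hyC]
        have := hδ hyC (by linarith)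
        linarith
      · rw [hFU y hyC]
        set z : U := ⟨y, hyC⟩ with hz
        have key : g z ∈ Metric.closedBall (f x) (ε / 2) := by
          refine ρ.finsum_smul_mem_convex (g := fun i _ => f (c i)) (Set.mem_univ z)
            (fun i hi => ?_) (convex_closedBall _ _)
          have hzV : z ∈ V i := hρ i (subset_tsupport _ hi)
          have h1 : dist y (i : E) < r i / 2 := hzV
          have h2 : r i ≤ dist (i : E) y + dist y x := by
            calc r i ≤ dist (i : E) x := Metric.infDist_le_dist_of_mem hx
            _ ≤ dist (i : E) y + dist y x := dist_triangle _ _ _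
          have h3 : r i < 2 * dist y x := by
            rw [dist_comm] at h1; linarith
          have h4 : dist (c i) x < δ₁ := by
            have t4 : dist (c i) x ≤ dist (c i) (i : E) + dist (i : E) y + dist y x :=
              dist_triangle4 _ _ _ _
            have hci : dist (i : E) (c i) < 2 * r i := hcdist i
            rw [dist_comm (c i) (i : E)] at t4
            rw [dist_comm (i : E) y] at t4
            linarith
          have := hδ (hcC i) h4
          exact Metric.mem_closedBall.mpr this.le
        have : dist (g z) (f x) ≤ ε / 2 := Metric.mem_closedBall.mp key
        linarith
    · -- continuity on the open complement
      have hFUcont : ContinuousOn F U := by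
        rw [continuousOn_iff_continuous_restrict]
        have : U.domRestrict F = g := by
          funext z
          show F (z : E) = g z
          exact hFU z z.2
        rw [this]; exact hgcont
      exact hFUcont.continuousAt (hUopen.mem_nhds hx)
  · intro u
    by_cases h : u ∈ C
    · rw [hFC u h]; exact hfK u h
    · rw [hFU u h]; exact hgK _
end
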